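/- Let φ ∈ P, let s ⊆ I be a finite set, let r : I → P be a family with r i = 0 for i ∉ s, and let N ∈ ℕ be such that pderiv (i,n) φ = 0 for all i ∈ s and all n ≥ N. Then ∑_{i ∈ s} ∑_{n=0}^{N−1} D^n(r i) · pderiv (i,n) φ − ∑_{i ∈ s} (r i) · ( ∑_{n=0}^{N−1} (−1)^n D^n (pderiv (i,n) φ) ) lies in ∂P. In other words, modulo total derivatives, the directional derivative of ∫φ in the direction r is represented by the variational derivative: ∫ ∑_{i,n} ∂^n(r^i) ∂φ/∂u_i^{(n)} = ∫ ∑_i r^i δφ/δu_i (the integration-by-parts identity underlying Lemma 4.6, equations (4.9)–(4.10), in the purely even case). -/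
import Mathlib


open MvPolynomial

lemma ibp_key {I : Type*}
    (D : Derivation ℂ (MvPolynomial (I × ℕ) ℂ) (MvPolynomial (I × ℕ) ℂ)) :
    ∀ (n : ℕ) (a b : MvPolynomial (I × ℕ) ℂ), ∃ c,
      (⇑D)^[n] a * b - ((-1 : ℂ) ^ n) • (a * (⇑D)^[n] b) = D c := by
  intro n
  induction n with
  | zero => intro a b; exact ⟨0, by simp⟩
  | succ n ih =>
    intro a b
    obtain ⟨c, hc⟩ := ih a (D b)
    refine ⟨(⇑D)^[n] a * b - c, ?_⟩
    have hL : D ((⇑D)^[n] a * b) = (⇑D)^[n+1] a * b + (⇑D)^[n] a * D b := by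
      rw [Function.iterate_succ_apply', D.leibniz, smul_eq_mul, smul_eq_mul]
      ring
    rw [map_sub, hL, ← hc, Function.iterate_succ_apply, Function.iterate_succ_apply,
      pow_succ, mul_comm ((-1:ℂ)^n) (-1), neg_one_mul, neg_smul]
    abel

/-- The integration-by-parts identity underlying Lemma 4.6 (equations (4.9)–(4.10)),
purely even case: modulo total derivatives, the directional derivative of `∫φ` in the
direction `r` is represented by the variational derivative:
`∫ ∑_{i,n} ∂ⁿ(rⁱ) ∂φ/∂u_i^{(n)} = ∫ ∑_i rⁱ δφ/δu_i`. -/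
theorem stmt_3 {I : Type*}
    (D : Derivation ℂ (MvPolynomial (I × ℕ) ℂ) (MvPolynomial (I × ℕ) ℂ))
    (hD : ∀ (i : I) (n : ℕ), D (X (i, n)) = X (i, n + 1))
    (φ : MvPolynomial (I × ℕ) ℂ) (s : Finset I)
    (r : I → MvPolynomial (I × ℕ) ℂ)
    (hr : ∀ i ∉ s, r i = 0)
    (N : ℕ)
    (hN : ∀ i ∈ s, ∀ n : ℕ, N ≤ n → (pderiv (i, n)) φ = 0) :
    (∑ i ∈ s, ∑ n ∈ Finset.range N, (⇑D)^[n] (r i) * (pderiv (i, n)) φ)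
      - (∑ i ∈ s, r i *
          ∑ n ∈ Finset.range N, ((-1 : ℂ) ^ n) • (⇑D)^[n] ((pderiv (i, n)) φ))
      ∈ Set.range ⇑D := by
  choose c hc using fun i n => ibp_key D n (r i) (pderiv (i, n) φ)
  refine ⟨∑ i ∈ s, ∑ n ∈ Finset.range N, c i n, ?_⟩
  rw [map_sum]
  rw [← Finset.sum_sub_distrib]
  refine Finset.sum_congr rfl fun i _ => ?_
  rw [map_sum, Finset.mul_sum, ← Finset.sum_sub_distrib]
  refine Finset.sum_congr rfl fun n _ => ?_
  rw [← hc i n, mul_smul_comm]
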